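/- Let X be a locally compact metric space. Then X is locally interior if and only if for every point x ∈ X there exists ε > 0 such that for all y, z in the open ball B(x, ε) there exists a sequence of points p_n ∈ B(x, 2ε) with dist(p_n, y) → dist(y, z)/2 and dist(p_n, z) → dist(y, z)/2 as n → ∞. -/

import Mathlib

open Filter

/-- The length of a path `γ` in a metric space: its total variation, i.e. the supremum over
all partitions `t₀ ≤ t₁ ≤ … ≤ tₙ` of `[0,1]` of `Σ dist (γ tᵢ₋₁) (γ tᵢ)` (with value
in `ℝ≥0∞`). -/
noncomputable def pathLength {X : Type*} [MetricSpace X] {y z : X} (γ : Path y z) : ENNReal :=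
  eVariationOn γ Set.univ

/-- A metric space is locally interior if every point has an `ε > 0` such that the distance
between any two points of `B(x, ε)` equals the infimum of the lengths of paths joining
them. -/
def LocallyInterior (X : Type*) [MetricSpace X] : Prop :=
  ∀ x : X, ∃ ε > 0, ∀ y ∈ Metric.ball x ε, ∀ z ∈ Metric.ball x ε,
    edist y z = ⨅ γ : Path y z, pathLength γ

private lemma unitInterval_Icc : (Set.Icc (0:unitInterval) 1) = Set.univ := by
  ext t
  simp only [Set.mem_Icc, Set.mem_univ, iff_true]
  constructor
  · exact_mod_cast t.2.1
  · exact_mod_cast t.2.2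

private lemma unitInterval_univ_inter :
    (Set.univ : Set unitInterval) ∩ Set.Icc 0 1 = Set.univ := by
  rw [unitInterval_Icc, Set.univ_inter]

section aux
variable {X : Type*}

/-- Dyadic midpoint construction. -/
private noncomputable def midSeq (m : X → X → ℝ → X) (y z : X) (η : ℝ) : ℕ → ℕ → X
  | 0, j => if j = 0 then y else z
  | (n+1), j =>
      if 2 ^ (n+1) ≤ j then z
      else if j % 2 = 0 then midSeq m y z η n (j / 2)
      else m (midSeq m y z η n (j / 2)) (midSeq m y z η n (j / 2 + 1)) (η / 4 ^ (n+1))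

private lemma midSeq_cap (m : X → X → ℝ → X) (y z : X) (η : ℝ) :
    ∀ n j, 2 ^ n ≤ j → midSeq m y z η n j = z := by
  intro n j hj
  cases n with
  | zero => simp only [midSeq]; rw [if_neg]; omega
  | succ n => simp only [midSeq]; rw [if_pos hj]

private lemma midSeq_zero (m : X → X → ℝ → X) (y z : X) (η : ℝ) :
    ∀ n, midSeq m y z η n 0 = y := by
  intro n
  induction n with
  | zero => simp [midSeq]
  | succ n ih =>
      have h : 0 < 2 ^ (n+1) := pow_pos (by norm_num) _
      simp only [midSeq]
      rw [if_neg (by simp), if_pos (by simp)]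
      simpa using ih

end aux

private lemma midSeq_two_mul (m : X → X → ℝ → X) (y z : X) (η : ℝ) :
    ∀ n j, midSeq m y z η (n+1) (2*j) = midSeq m y z η n j := by
  intro n j
  rcases le_or_gt (2^n) j with hj | hj
  · rw [midSeq_cap m y z η n j hj,
      midSeq_cap m y z η (n+1) (2*j) (by rw [pow_succ, Nat.mul_comm]; omega)]
  · have h2 : 2^(n+1) = 2 * 2^n := by rw [pow_succ, Nat.mul_comm]
    simp only [midSeq]
    rw [if_neg (by omega), if_pos (by omega)]
    congr 1
    omega

set_option maxHeartbeats 2000000 in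
private lemma exists_path_length_le [MetricSpace X] {x y z : X} {ε r η : ℝ}
    (hη : 0 < η)
    (hcomp : IsCompact (Metric.closedBall x r))
    (M : ∀ a ∈ Metric.ball x ε, ∀ b ∈ Metric.ball x ε, ∀ δ > 0,
        ∃ p : X, dist p a ≤ dist a b / 2 + δ ∧ dist p b ≤ dist a b / 2 + δ)
    (hy : dist y x < min ε r / 4) (hz : dist z x < min ε r / 4)
    (hη' : η ≤ min ε r / 4) :
    ∃ γ : Path y z, pathLength γ ≤ ENNReal.ofReal (dist y z + η) := by
  classical
  set d := dist y z with hd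
  set ε' := min ε r / 4 with hε'
  have hε'0 : 0 < ε' := lt_of_le_of_lt dist_nonneg hy
  have hd0 : 0 ≤ d := dist_nonneg
  have hd2 : d < 2 * ε' := by
    have h1 := dist_triangle y x z
    have h2 : dist x z = dist z x := dist_comm x z
    linarith
  have hball : ∀ w : X, dist w y ≤ d + η →
      w ∈ Metric.ball x ε ∧ w ∈ Metric.closedBall x r := by
    intro w hw
    have h1 : dist w x ≤ dist w y + dist y x := dist_triangle w y x
    have h2 : dist w x < 4 * ε' := by linarith
    have h3 : 4 * ε' ≤ ε := by rw [hε']; have := min_le_left ε r; linarith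
    have h4 : 4 * ε' ≤ r := by rw [hε']; have := min_le_right ε r; linarith
    exact ⟨Metric.mem_ball.2 (by linarith), Metric.mem_closedBall.2 (by linarith)⟩
  set m : X → X → ℝ → X := fun a b δ =>
    if h : a ∈ Metric.ball x ε ∧ b ∈ Metric.ball x ε ∧ 0 < δ then
      (M a h.1 b h.2.1 δ h.2.2).choose
    else a with hmdef
  have hm : ∀ a b δ, a ∈ Metric.ball x ε → b ∈ Metric.ball x ε → 0 < δ →
      dist (m a b δ) a ≤ dist a b / 2 + δ ∧ dist (m a b δ) b ≤ dist a b / 2 + δ := by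
    intro a b δ ha hb hδ
    rw [hmdef]
    simp only [dif_pos (⟨ha, hb, hδ⟩ : a ∈ Metric.ball x ε ∧ b ∈ Metric.ball x ε ∧ 0 < δ)]
    exact (M a ha b hb δ hδ).choose_spec
  set g := midSeq m y z η with hgdef
  set B : ℕ → ℝ := fun n => (d + η)/2^n - η/4^n with hB
  have h24 : ∀ n : ℕ, (2:ℝ)^n ≤ 4^n := fun n => by gcongr <;> norm_num
  have hBpos : ∀ n, 0 ≤ B n := by
    intro n
    rw [hB]; simp only
    have h1 : (η:ℝ)/4^n ≤ η/2^n := by gcongr ?_ / ?_ <;> [exact le_rfl; exact h24 n]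
    have h2 : (η:ℝ)/2^n ≤ (d+η)/2^n := by gcongr; linarith
    linarith
  have hBle : ∀ n, B n ≤ (d + η)/2^n := by
    intro n; rw [hB]; simp only
    have : (0:ℝ) ≤ η/4^n := by positivity
    linarith
  have hBsucc : ∀ n, B n / 2 + η/4^(n+1) = B (n+1) := by
    intro n; rw [hB]; simp only
    rw [pow_succ, pow_succ]
    field_simp
    ring
  have hBbound : ∀ n, (2:ℝ)^n * B n ≤ d + η := by
    intro n; rw [hB]; simp only
    have h2 : (0:ℝ) < 2^n := by positivity
    rw [mul_sub, mul_div_cancel₀ _ h2.ne']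
    have : (0:ℝ) ≤ 2^n * (η/4^n) := by positivity
    linarith
  have key : ∀ n, (∀ j, dist (g n j) (g n (j+1)) ≤ B n) ∧ (∀ j, dist (g n j) y ≤ d + η) := by
    intro n
    induction n with
    | zero =>
        constructor
        · intro j
          rcases Nat.eq_zero_or_pos j with rfl | hj
          · have hy0 : g 0 0 = y := midSeq_zero m y z η 0
            have h1 : g 0 1 = z := by rw [hgdef]; simp [midSeq]
            rw [hy0, h1, ← hd, hB]
            norm_num
          · have h1 : g 0 j = z := by
              rw [hgdef]; exact midSeq_cap m y z η 0 j (by omega)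
            have h2 : g 0 (j+1) = z := by
              rw [hgdef]; exact midSeq_cap m y z η 0 (j+1) (by omega)
            rw [h1, h2, dist_self]
            exact hBpos 0
        · intro j
          rcases Nat.eq_zero_or_pos j with rfl | hj
          · rw [hgdef, midSeq_zero m y z η 0, dist_self]; linarith
          · have h1 : g 0 j = z := by
              rw [hgdef]; exact midSeq_cap m y z η 0 j (by omega)
            rw [h1, dist_comm, ← hd]
            linarith
    | succ n ih =>
        have hmem : ∀ j, g n j ∈ Metric.ball x ε := fun j => (hball _ (ih.2 j)).1
        have hδ : 0 < η/4^(n+1) := by positivity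
        have h2n : 2^(n+1) = 2 * 2^n := by rw [pow_succ, Nat.mul_comm]
        have hadj : ∀ j, dist (g (n+1) j) (g (n+1) (j+1)) ≤ B (n+1) := by
          intro j
          rcases le_or_gt (2^(n+1)) j with hcap | hcap
          · rw [hgdef, midSeq_cap m y z η (n+1) j hcap,
              midSeq_cap m y z η (n+1) (j+1) (by omega), dist_self]
            exact hBpos (n+1)
          · rcases Nat.even_or_odd j with ⟨k, hk⟩ | ⟨k, hk⟩
            · -- j = 2k
              have hgj : g (n+1) j = g n k := by
                rw [hgdef]; simp only [midSeq]
                rw [if_neg (by omega), if_pos (by omega)]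
                have e1 : j / 2 = k := by omega
                rw [e1]
              have hj1 : j + 1 < 2^(n+1) := by omega
              have hgj1 : g (n+1) (j+1) = m (g n k) (g n (k+1)) (η/4^(n+1)) := by
                rw [hgdef]; simp only [midSeq]
                rw [if_neg (by omega), if_neg (by omega)]
                have e1 : (j+1) / 2 = k := by omega
                rw [e1]
              rw [hgj, hgj1, dist_comm, ← hBsucc n]
              have hmm := (hm (g n k) (g n (k+1)) (η/4^(n+1)) (hmem k) (hmem (k+1)) hδ).1
              have hb := ih.1 k
              exact hmm.trans (by gcongr <;> linarith [hb])
            · -- j = 2k+1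
              have hgj : g (n+1) j = m (g n k) (g n (k+1)) (η/4^(n+1)) := by
                rw [hgdef]; simp only [midSeq]
                rw [if_neg (by omega), if_neg (by omega)]
                have e1 : j / 2 = k := by omega
                rw [e1]
              have hgj1 : g (n+1) (j+1) = g n (k+1) := by
                rcases lt_or_ge (j+1) (2^(n+1)) with h | h
                · rw [hgdef]; simp only [midSeq]
                  rw [if_neg (by omega), if_pos (by omega)]
                  have e1 : (j+1) / 2 = k + 1 := by omega
                  rw [e1]
                · have hk1 : 2^n ≤ k + 1 := by omega
                  rw [hgdef, midSeq_cap m y z η (n+1) (j+1) h,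
                    midSeq_cap m y z η n (k+1) hk1]
              rw [hgj, hgj1, ← hBsucc n]
              have hmm := (hm (g n k) (g n (k+1)) (η/4^(n+1)) (hmem k) (hmem (k+1)) hδ).2
              have hb := ih.1 k
              exact hmm.trans (by gcongr <;> linarith [hb])
        refine ⟨hadj, ?_⟩
        have hchain : ∀ i, dist (g (n+1) 0) (g (n+1) i) ≤ i * B (n+1) := by
          intro i
          induction i with
          | zero => simp
          | succ i ihc =>
              have h1 := dist_triangle (g (n+1) 0) (g (n+1) i) (g (n+1) (i+1))
              have h2 := hadj i
              push_cast
              push_cast at ihc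
              linarith
        intro j
        rcases le_or_gt (2^(n+1)) j with hcap | hcap
        · rw [hgdef, midSeq_cap m y z η (n+1) j hcap, dist_comm, ← hd]
          linarith
        · have h0 : g (n+1) 0 = y := midSeq_zero m y z η (n+1)
          have h1 : dist (g (n+1) j) y ≤ j * B (n+1) := by
            rw [← h0, dist_comm]; exact hchain j
          have h2 : (j:ℝ) * B (n+1) ≤ (2:ℝ)^(n+1) * B (n+1) := by
            apply mul_le_mul_of_nonneg_right _ (hBpos (n+1))
            have : ((j:ℝ)) ≤ ((2^(n+1) : ℕ) : ℝ) := Nat.cast_le.mpr hcap.le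
            push_cast at this
            linarith
          have h3 := hBbound (n+1)
          linarith
  -- continuation
  set a : ℕ → ℝ → X := fun n t => g n ⌊t * 2^n⌋₊ with ha
  have hmemK : ∀ (n : ℕ) (t : ℝ), a n t ∈ Metric.closedBall x r :=
    fun n t => (hball _ ((key n).2 _)).2
  have hcons : ∀ n j, g (n+1) (2*j) = g n j := fun n j => by
    rw [hgdef]; exact midSeq_two_mul m y z η n j
  -- general chain bound
  have hchain : ∀ n i l : ℕ, dist (g n i) (g n (i + l)) ≤ l * B n := by
    intro n i l
    induction l with
    | zero => simp
    | succ l ihl =>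
        have h1 := dist_triangle (g n i) (g n (i+l)) (g n (i+l+1))
        have h2 := (key n).1 (i+l)
        have e : i + (l+1) = (i + l) + 1 := by omega
        rw [e]
        push_cast
        push_cast at ihl
        linarith
  have hstep : ∀ t : ℝ, 0 ≤ t → ∀ n, dist (a n t) (a (n+1) t) ≤ ((d+η)/2) * (1/2)^n := by
    intro t ht n
    have h2t : (0:ℝ) ≤ t * 2^n := by positivity
    set k := ⌊t * 2^n⌋₊ with hk
    set k' := ⌊t * 2^(n+1)⌋₊ with hk'
    have h1 : 2*k ≤ k' := by
      rw [hk']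
      apply Nat.le_floor
      have hfl := Nat.floor_le h2t
      rw [← hk] at hfl
      push_cast
      rw [pow_succ]
      nlinarith
    have h2 : k' ≤ 2*k + 1 := by
      have h2' : t * 2^(n+1) < ((2*k+2 : ℕ):ℝ) := by
        have h3 := Nat.lt_floor_add_one (t * 2^n)
        rw [← hk] at h3
        push_cast
        rw [pow_succ]
        nlinarith
      have := (Nat.floor_lt (by positivity)).2 h2'
      omega
    have e1 : a n t = g (n+1) (2*k) := by rw [ha]; simp only; rw [hcons n k]
    have e2 : a (n+1) t = g (n+1) k' := by rw [ha]
    have hbnd : B (n+1) ≤ ((d+η)/2) * (1/2)^n := by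
      have h5 := hBle (n+1)
      have e : ((d+η)/2) * ((1:ℝ)/2)^n = (d+η)/2^(n+1) := by
        rw [pow_succ, div_pow, one_pow]
        ring
      rw [e]
      exact h5
    rcases Nat.eq_or_lt_of_le h1 with he | hlt
    · rw [e1, e2, ← he, dist_self]
      have : (0:ℝ) ≤ ((d+η)/2) * (1/2)^n := by positivity
      linarith
    · have he : k' = 2*k + 1 := by omega
      rw [e1, e2, he]
      exact ((key (n+1)).1 (2*k)).trans hbnd
  have hcauchy : ∀ t : ℝ, 0 ≤ t → CauchySeq (fun n => a n t) :=
    fun t ht => cauchySeq_of_le_geometric (1/2) ((d+η)/2) (by norm_num) (hstep t ht)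
  have hlim : ∀ t : ℝ, 0 ≤ t → ∃ p, Tendsto (fun n => a n t) atTop (nhds p) := by
    intro t ht
    obtain ⟨p, -, hp⟩ := cauchySeq_tendsto_of_isComplete hcomp.isComplete
      (fun n => hmemK n t) (hcauchy t ht)
    exact ⟨p, hp⟩
  obtain ⟨γ₀, hγ₀⟩ : ∃ γ₀ : ℝ → X, ∀ t : ℝ, 0 ≤ t →
      Tendsto (fun n => a n t) atTop (nhds (γ₀ t)) :=
    ⟨fun t => if h : 0 ≤ t then (hlim t h).choose else y,
     fun t h => by dsimp only; rw [dif_pos h]; exact (hlim t h).choose_spec⟩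
  have hlip : ∀ s, 0 ≤ s → ∀ t, s ≤ t → dist (γ₀ s) (γ₀ t) ≤ (d+η) * (t - s) := by
    intro s hs t hst
    have ht : 0 ≤ t := hs.trans hst
    have hb : ∀ n : ℕ, dist (a n s) (a n t) ≤ (d+η) * (t-s) + (d+η) * (1/2)^n := by
      intro n
      have h2s : (0:ℝ) ≤ s * 2^n := by positivity
      set j := ⌊s * 2^n⌋₊ with hj
      set k := ⌊t * 2^n⌋₊ with hk
      have hjk : j ≤ k := by
        rw [hj, hk]
        apply Nat.floor_le_floor
        gcongr
      have hch := hchain n j (k - j)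
      have e : j + (k - j) = k := by omega
      rw [e] at hch
      have hkj : ((k - j : ℕ) : ℝ) ≤ (t - s)*2^n + 1 := by
        have h1 : (k:ℝ) ≤ t * 2^n := by rw [hk]; exact Nat.floor_le (by positivity)
        have h2 : s * 2^n < (j:ℝ) + 1 := by rw [hj]; exact Nat.lt_floor_add_one _
        rw [Nat.cast_sub hjk]
        nlinarith
      have h6 : (0:ℝ) ≤ (t - s) * 2^n + 1 := by
        have h7 : (0:ℝ) ≤ (t-s)*2^n := mul_nonneg (by linarith) (by positivity)
        linarith
      have h5 : ((k-j:ℕ):ℝ) * B n ≤ ((t-s)*2^n + 1) * ((d+η)/2^n) :=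
        mul_le_mul hkj (hBle n) (hBpos n) h6
      have h7 : ((t-s)*2^n + 1) * ((d+η)/2^n) = (d+η)*(t-s) + (d+η)*(1/2)^n := by
        have h8 : ((1:ℝ)/2)^n = 1/2^n := by rw [one_div, inv_pow, one_div]
        rw [h8]
        field_simp
      rw [h7] at h5
      calc dist (a n s) (a n t) = dist (g n j) (g n k) := by rw [ha]
        _ ≤ ((k-j:ℕ):ℝ) * B n := hch
        _ ≤ (d+η)*(t-s) + (d+η)*(1/2)^n := h5
    have hten : Tendsto (fun n => dist (a n s) (a n t)) atTop
        (nhds (dist (γ₀ s) (γ₀ t))) := (hγ₀ s hs).dist (hγ₀ t ht)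
    have hten2 : Tendsto (fun n : ℕ => (d+η)*(t-s) + (d+η)*(1/2:ℝ)^n) atTop
        (nhds ((d+η)*(t-s))) := by
      have h9 : Tendsto (fun n : ℕ => (d+η)*(1/2:ℝ)^n) atTop (nhds 0) := by
        have := tendsto_pow_atTop_nhds_zero_of_lt_one
          (by norm_num : (0:ℝ) ≤ 1/2) (by norm_num : (1:ℝ)/2 < 1)
        simpa using this.const_mul (d+η)
      simpa using tendsto_const_nhds.add h9
    exact le_of_tendsto_of_tendsto' hten hten2 hb
  have hy0 : γ₀ 0 = y := by
    have h1 : ∀ n : ℕ, a n 0 = y := by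
      intro n
      rw [ha]; simp only
      rw [zero_mul, Nat.floor_zero, hgdef]
      exact midSeq_zero m y z η n
    refine tendsto_nhds_unique (hγ₀ 0 le_rfl) ?_
    simp only [h1]
    exact tendsto_const_nhds
  have hz1 : γ₀ 1 = z := by
    have h1 : ∀ n : ℕ, a n 1 = z := by
      intro n
      rw [ha]; simp only
      rw [one_mul]
      have e : (2:ℝ)^n = ((2^n : ℕ):ℝ) := by push_cast; ring
      rw [e, Nat.floor_natCast, hgdef]
      exact midSeq_cap m y z η n (2^n) le_rfl
    refine tendsto_nhds_unique (hγ₀ 1 zero_le_one) ?_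
    simp only [h1]
    exact tendsto_const_nhds
  have hlip2 : LipschitzOnWith (d+η).toNNReal γ₀ (Set.Icc 0 1) := by
    apply LipschitzOnWith.of_dist_le_mul
    intro s hs t ht
    rw [Real.coe_toNNReal _ (by linarith)]
    rcases le_total s t with h | h
    · have e : dist s t = t - s := by rw [Real.dist_eq, abs_of_nonpos (by linarith)]; ring
      rw [e]
      exact hlip s hs.1 t h
    · have e : dist s t = s - t := by rw [Real.dist_eq, abs_of_nonneg (by linarith)]
      rw [dist_comm (γ₀ s) (γ₀ t), e]
      exact hlip t ht.1 s h
  have hcont : Continuous fun t : unitInterval => γ₀ t :=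
    (lipschitzOnWith_iff_restrict.mp hlip2).continuous
  refine ⟨⟨⟨fun t : unitInterval => γ₀ t, hcont⟩, hy0, hz1⟩, ?_⟩
  have hmaps : Set.MapsTo (Subtype.val : unitInterval → ℝ) Set.univ (Set.Icc 0 1) :=
    fun t _ => t.2
  have hcomp2 := hlip2.comp_eVariationOn_le hmaps
  have hval : eVariationOn (Subtype.val : unitInterval → ℝ) Set.univ ≤ 1 := by
    have hmono : MonotoneOn (Subtype.val : unitInterval → ℝ) Set.univ :=
      fun p _ q _ h => h
    have h2 := hmono.eVariationOn_le (Set.mem_univ 0) (Set.mem_univ 1)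
    rw [unitInterval_univ_inter] at h2
    simpa using h2
  have hlen : eVariationOn (γ₀ ∘ (Subtype.val : unitInterval → ℝ)) Set.univ ≤
      ENNReal.ofReal (d + η) := calc
    eVariationOn (γ₀ ∘ (Subtype.val : unitInterval → ℝ)) Set.univ
      ≤ (d+η).toNNReal * eVariationOn (Subtype.val : unitInterval → ℝ) Set.univ := hcomp2
    _ ≤ (d+η).toNNReal * 1 := by gcongr
    _ = ENNReal.ofReal (d + η) := by rw [mul_one]; rfl
  exact hlen

set_option maxHeartbeats 1000000 in
/-- A locally compact metric space is locally interior iff every point `x` has an `ε > 0`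
such that for all `y, z ∈ B(x, ε)` there is a sequence `pₙ ∈ B(x, 2ε)` of approximate
midpoints: `dist (pₙ) y → dist y z / 2` and `dist (pₙ) z → dist y z / 2`. -/
theorem locallyInterior_iff_approx_midpoints
    (X : Type*) [MetricSpace X] [LocallyCompactSpace X] :
    LocallyInterior X ↔
      ∀ x : X, ∃ ε > 0, ∀ y ∈ Metric.ball x ε, ∀ z ∈ Metric.ball x ε,
        ∃ p : ℕ → X, (∀ n, p n ∈ Metric.ball x (2 * ε)) ∧
          Tendsto (fun n => dist (p n) y) atTop (nhds (dist y z / 2)) ∧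
          Tendsto (fun n => dist (p n) z) atTop (nhds (dist y z / 2)) := by
  constructor
  · -- forward direction
    intro h x
    obtain ⟨ε, hε, hloc⟩ := h x
    refine ⟨ε, hε, ?_⟩
    intro y hy z hz
    have hy' := Metric.mem_ball.1 hy
    have hz' := Metric.mem_ball.1 hz
    have hdx : dist y z < 2 * ε := by
      have h1 := dist_triangle y x z
      have h2 : dist x z = dist z x := dist_comm x z
      linarith
    have hc : 0 < ε - dist y z / 2 := by linarith
    have hex : ∀ n : ℕ, ∃ q : X, dist q y = dist q z ∧
        2 * dist q y ≤ dist y z + min (ε - dist y z / 2) (1/(n+1)) := by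
      intro n
      have hc0 : 0 < min (ε - dist y z / 2) (1/(n+1) : ℝ) :=
        lt_min hc (by positivity)
      have hlt : ⨅ γ : Path y z, pathLength γ <
          edist y z + ENNReal.ofReal (min (ε - dist y z / 2) (1/(n+1))) := by
        rw [← hloc y hy z hz]
        exact ENNReal.lt_add_right (edist_ne_top y z)
          (ENNReal.ofReal_pos.mpr hc0).ne'
      obtain ⟨γ, hγ⟩ := iInf_lt_iff.mp hlt
      have hcontf : Continuous fun t : unitInterval => dist (γ t) y - dist (γ t) z :=
        (γ.continuous.dist continuous_const).sub (γ.continuous.dist continuous_const)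
      have hmem0 : (0:ℝ) ∈ Set.Icc
          ((fun t : unitInterval => dist (γ t) y - dist (γ t) z) 0)
          ((fun t : unitInterval => dist (γ t) y - dist (γ t) z) 1) := by
        simp only [γ.source, γ.target, dist_self, Set.mem_Icc]
        constructor
        · have := dist_nonneg (x := y) (y := z); linarith
        · have h1 := dist_nonneg (x := z) (y := y); linarith
      obtain ⟨t, ht⟩ := intermediate_value_univ (0:unitInterval) 1 hcontf hmem0
      have heq : dist (γ t) y = dist (γ t) z := by
        simp only at ht
        linarith
      have ht0 : (0:unitInterval) ≤ t := t.2.1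
      have ht1 : t ≤ (1:unitInterval) := t.2.2
      have hsplit : eVariationOn γ (Set.univ ∩ Set.Icc 0 t) +
          eVariationOn γ (Set.univ ∩ Set.Icc t 1) = pathLength γ := by
        rw [eVariationOn.Icc_add_Icc γ ht0 ht1 (Set.mem_univ t), unitInterval_univ_inter]
        rfl
      have h1 : edist (γ 0) (γ t) ≤ eVariationOn γ (Set.univ ∩ Set.Icc 0 t) :=
        eVariationOn.edist_le γ ⟨Set.mem_univ _, le_rfl, ht0⟩ ⟨Set.mem_univ _, ht0, le_rfl⟩
      have h2 : edist (γ t) (γ 1) ≤ eVariationOn γ (Set.univ ∩ Set.Icc t 1) :=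
        eVariationOn.edist_le γ ⟨Set.mem_univ _, le_rfl, ht1⟩ ⟨Set.mem_univ _, ht1, le_rfl⟩
      rw [γ.source] at h1
      rw [γ.target] at h2
      have h3 : edist y (γ t) + edist (γ t) z <
          edist y z + ENNReal.ofReal (min (ε - dist y z/2) (1/(n+1))) :=
        lt_of_le_of_lt (le_trans (add_le_add h1 h2) (le_of_eq hsplit)) hγ
      have h4 : dist y (γ t) + dist (γ t) z ≤
          dist y z + min (ε - dist y z/2) (1/(n+1)) := by
        have h5 : edist y (γ t) + edist (γ t) z =
            ENNReal.ofReal (dist y (γ t) + dist (γ t) z) := by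
          rw [edist_dist, edist_dist, ENNReal.ofReal_add dist_nonneg dist_nonneg]
        have h6 : edist y z + ENNReal.ofReal (min (ε - dist y z/2) (1/(n+1))) =
            ENNReal.ofReal (dist y z + min (ε - dist y z/2) (1/(n+1))) := by
          rw [edist_dist, ENNReal.ofReal_add dist_nonneg hc0.le]
        rw [h5, h6] at h3
        exact le_of_lt ((ENNReal.ofReal_lt_ofReal_iff_of_nonneg (by positivity)).mp h3)
      refine ⟨γ t, heq, ?_⟩
      have e : dist y (γ t) = dist (γ t) y := dist_comm _ _
      linarith
    choose q hq1 hq2 using hex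
    have hlow : ∀ n, dist y z / 2 ≤ dist (q n) y := by
      intro n
      have h1 := dist_triangle y (q n) z
      have h2 : dist y (q n) = dist (q n) y := dist_comm _ _
      have h3 := hq1 n
      linarith
    have hupp : ∀ n, dist (q n) y ≤ dist y z / 2 + (1/(n+1:ℝ))/2 := by
      intro n
      have h1 := hq2 n
      have h2 : min (ε - dist y z/2) (1/(n+1):ℝ) ≤ 1/(n+1:ℝ) := min_le_right _ _
      linarith
    have hty : Tendsto (fun n => dist (q n) y) atTop (nhds (dist y z / 2)) := by
      apply tendsto_of_tendsto_of_tendsto_of_le_of_le tendsto_const_nhds ?_ hlow hupp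
      have h9 : Tendsto (fun n : ℕ => 1 / ((n : ℝ) + 1)) atTop (nhds 0) :=
        tendsto_one_div_add_atTop_nhds_zero_nat
      simpa using (tendsto_const_nhds :
        Tendsto (fun _ : ℕ => dist y z / 2) atTop (nhds (dist y z / 2))).add
        (h9.div_const 2)
    refine ⟨q, ?_, hty, hty.congr fun n => by rw [hq1 n]⟩
    intro n
    rw [Metric.mem_ball]
    have h5 := hq2 n
    have h6 : min (ε - dist y z/2) (1/(n+1):ℝ) ≤ ε - dist y z/2 := min_le_left _ _
    have h7 := dist_triangle (q n) y x
    linarith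
  · -- backward direction
    intro H x
    obtain ⟨K, hKc, hKn⟩ := exists_compact_mem_nhds x
    obtain ⟨r, hr0, hrK⟩ := Metric.nhds_basis_closedBall.mem_iff.mp hKn
    have hcomp : IsCompact (Metric.closedBall x r) :=
      hKc.of_isClosed_subset Metric.isClosed_closedBall hrK
    obtain ⟨ε, hε, hmid⟩ := H x
    have M : ∀ a ∈ Metric.ball x ε, ∀ b ∈ Metric.ball x ε, ∀ δ > 0,
        ∃ p : X, dist p a ≤ dist a b / 2 + δ ∧ dist p b ≤ dist a b / 2 + δ := by
      intro a ha b hb δ hδ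
      obtain ⟨p, -, h1, h2⟩ := hmid a ha b hb
      have e1 : ∀ᶠ n in atTop, dist (p n) a ≤ dist a b / 2 + δ :=
        h1.eventually (eventually_le_nhds (by linarith))
      have e2 : ∀ᶠ n in atTop, dist (p n) b ≤ dist a b / 2 + δ :=
        h2.eventually (eventually_le_nhds (by linarith))
      obtain ⟨n, hn1, hn2⟩ := (e1.and e2).exists
      exact ⟨p n, hn1, hn2⟩
    refine ⟨min ε r / 4, by
      have := lt_min hε hr0
      linarith, ?_⟩
    intro y hy z hz
    rw [Metric.mem_ball] at hy hz
    refine le_antisymm ?_ ?_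
    · apply le_iInf
      intro γ
      have h1 := eVariationOn.edist_le γ (Set.mem_univ (0:unitInterval)) (Set.mem_univ 1)
      rw [γ.source, γ.target] at h1
      exact h1
    · apply ENNReal.le_of_forall_pos_le_add
      intro δ hδ _
      have hη : 0 < min (δ:ℝ) (min ε r / 4) := by
        have h1 : (0:ℝ) < δ := by exact_mod_cast hδ
        have h2 := lt_min hε hr0
        have h3 : (0:ℝ) < min ε r / 4 := by linarith
        exact lt_min h1 h3
      obtain ⟨γ, hγ⟩ := exists_path_length_le hη hcomp M hy hz (min_le_right _ _)
      refine le_trans (iInf_le _ γ) (hγ.trans ?_)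
      rw [ENNReal.ofReal_add dist_nonneg hη.le, edist_dist]
      gcongr
      calc ENNReal.ofReal (min (δ:ℝ) (min ε r / 4)) ≤ ENNReal.ofReal (δ:ℝ) :=
            ENNReal.ofReal_le_ofReal (min_le_left _ _)
        _ = (δ : ENNReal) := ENNReal.ofReal_coe_nnreal
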